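/- Let H, K be complex Hilbert spaces, ξ ∈ K a unit vector, M a bounded selfadjoint operator on K, and U a unitary on H ⊗ K. Let E^M be the spectral measure of M and define the POVM E(X) on H by ⟨ψ, E(X)ψ⟩ = ⟨U(ψ⊗ξ), (I ⊗ E^M(X)) U(ψ⊗ξ)⟩. Then E is projection valued if and only if (I ⊗ P_ξ) commutes with U*(I ⊗ E^M(X))U for every Borel set X, where P_ξ is the orthogonal projection onto ℂξ. -/

import Mathlib

open ContinuousLinearMap
open scoped InnerProductSpace

set_option maxHeartbeats 1000000 in
/-- A measurement scheme `⟨K, ξ, M, U⟩` is modelled abstractly: `T` plays the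
role of `H ⊗ K`, the isometry `j : H → T` is `ψ ↦ ψ ⊗ ξ` (so `j* j = I` and
`P_ξ := j j*` is the projection `I ⊗ |ξ⟩⟨ξ|`), `U` is the unitary coupling on `T`, and
`F X` is the spectral projection `I ⊗ E^M(X)` of the pointer observable. The measured
POVM is `E X := j* U* (F X) U j`, which satisfies the probability reproducibility
condition `⟨ψ, E(X) ψ⟩ = ⟨U(ψ⊗ξ), (I ⊗ E^M(X)) U(ψ⊗ξ)⟩`. Then `E` is projection valued
if and only if `I ⊗ P[ξ]` commutes with `U*(I ⊗ E^M(X))U` for every Borel set `X`. -/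
theorem measured_observable_projection_valued_iff_commute
    {H T : Type*} [NormedAddCommGroup H] [InnerProductSpace ℂ H] [CompleteSpace H]
    [NormedAddCommGroup T] [InnerProductSpace ℂ T] [CompleteSpace T]
    (j : H →L[ℂ] T) (hj : (adjoint j).comp j = 1)
    (U : T →L[ℂ] T) (hU1 : adjoint U * U = 1) (hU2 : U * adjoint U = 1)
    (F : Set ℝ → (T →L[ℂ] T))
    (hFsa : ∀ X : Set ℝ, MeasurableSet X → IsSelfAdjoint (F X))
    (hFidem : ∀ X : Set ℝ, MeasurableSet X → IsIdempotentElem (F X))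
    (hFnorm : F Set.univ = 1)
    (E : Set ℝ → (H →L[ℂ] H))
    (hE : ∀ X : Set ℝ, MeasurableSet X →
      E X = (adjoint j).comp (((adjoint U * F X * U)).comp j)) :
    (∀ X : Set ℝ, MeasurableSet X → IsIdempotentElem (E X))
      ↔ (∀ X : Set ℝ, MeasurableSet X →
          Commute (j.comp (adjoint j)) (adjoint U * F X * U)) := by
  have hjv : ∀ ψ : H, adjoint j (j ψ) = ψ := by
    intro ψ
    have := congrArg (fun f => f ψ) hj
    simpa using this
  have hU2v : ∀ t : T, U (adjoint U t) = t := by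
    intro t
    have := congrArg (fun f => f t) hU2
    simpa using this
  -- pointwise facts for A X := U† (F X) U
  have hAv : ∀ X : Set ℝ, ∀ t : T,
      (adjoint U * F X * U) t = adjoint U (F X (U t)) := by
    intro X t; simp [mul_apply]
  have hA2v : ∀ X : Set ℝ, MeasurableSet X → ∀ t : T,
      (adjoint U * F X * U) ((adjoint U * F X * U) t) = (adjoint U * F X * U) t := by
    intro X hX t
    have hFv : ∀ s : T, F X (F X s) = F X s := by
      intro s
      have := congrArg (fun f => f s) (hFidem X hX)
      simpa [mul_apply] using this
    simp [hAv, hU2v, hFv]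
  have hAinner : ∀ X : Set ℝ, MeasurableSet X → ∀ x y : T,
      ⟪(adjoint U * F X * U) x, y⟫_ℂ = ⟪x, (adjoint U * F X * U) y⟫_ℂ := by
    intro X hX x y
    have hFsaX : adjoint (F X) = F X := (hFsa X hX).adjoint_eq
    calc ⟪(adjoint U * F X * U) x, y⟫_ℂ = ⟪F X (U x), U y⟫_ℂ := by
          rw [hAv, adjoint_inner_left]
      _ = ⟪U x, F X (U y)⟫_ℂ := by
          conv_lhs => rw [← hFsaX]
          exact adjoint_inner_left (F X) (U y) (U x)
      _ = ⟪x, (adjoint U * F X * U) y⟫_ℂ := by rw [hAv, adjoint_inner_right]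
  have hjinner : ∀ (a : H) (y : T), ⟪j a, y⟫_ℂ = ⟪a, adjoint j y⟫_ℂ := by
    intro a y
    conv_lhs => rw [← adjoint_adjoint (A := j)]
    exact adjoint_inner_left (adjoint j) y a
  have hPinner : ∀ x y : T, ⟪j (adjoint j x), y⟫_ℂ = ⟪x, j (adjoint j y)⟫_ℂ := by
    intro x y
    calc ⟪j (adjoint j x), y⟫_ℂ = ⟪adjoint j x, adjoint j y⟫_ℂ := hjinner _ _
      _ = ⟪x, j (adjoint j y)⟫_ℂ := adjoint_inner_left j (adjoint j y) x
  have hP2v : ∀ t : T, j (adjoint j (j (adjoint j t))) = j (adjoint j t) := by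
    intro t; rw [hjv]
  constructor
  · intro hEidem X hX
    set A : T →L[ℂ] T := adjoint U * F X * U with hAdef
    -- pointwise form of idempotency of E X, sandwiched into T
    have hEv : ∀ ψ : H, adjoint j (A (j (adjoint j (A (j ψ))))) = adjoint j (A (j ψ)) := by
      intro ψ
      have h1 := congrArg (fun f => f ψ) (hEidem X hX)
      rw [hE X hX] at h1
      simpa [mul_apply, hAdef] using h1
    have hPA5 : ∀ t : T,
        j (adjoint j (A (j (adjoint j (A (j (adjoint j t))))))) =
          j (adjoint j (A (j (adjoint j t)))) :=
      fun t => congrArg j (hEv (adjoint j t))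
    -- key: P (A (P t)) = A (P t)
    have hkey : ∀ t : T, j (adjoint j (A (j (adjoint j t)))) = A (j (adjoint j t)) := by
      intro t
      obtain ⟨p, hp⟩ : ∃ p : T, p = j (adjoint j t) := ⟨_, rfl⟩
      obtain ⟨v, hv⟩ : ∃ v : T, v = A p := ⟨_, rfl⟩
      obtain ⟨w, hw⟩ : ∃ w : T, w = j (adjoint j v) := ⟨_, rfl⟩
      rw [← hp, ← hv, ← hw]
      have hPp : j (adjoint j p) = p := by rw [hp]; exact hP2v t
      have hPw : j (adjoint j w) = w := by rw [hw, hP2v, ← hw]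
      have hPAPw : j (adjoint j (A w)) = w := by
        rw [hw, hv, hp]
        exact hPA5 t
      have hvv : ⟪v, v⟫_ℂ = ⟪p, v⟫_ℂ := by
        conv_lhs => rw [hv, hAinner X hX, hA2v X hX, ← hv]
      have hvw : ⟪v, w⟫_ℂ = ⟪p, v⟫_ℂ := by
        calc ⟪v, w⟫_ℂ = ⟪A p, w⟫_ℂ := by rw [hv]
          _ = ⟪p, A w⟫_ℂ := hAinner X hX p w
          _ = ⟪j (adjoint j p), A w⟫_ℂ := by rw [hPp]
          _ = ⟪p, j (adjoint j (A w))⟫_ℂ := hPinner p (A w)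
          _ = ⟪p, w⟫_ℂ := by rw [hPAPw]
          _ = ⟪j (adjoint j p), v⟫_ℂ := by rw [hw, ← hPinner]
          _ = ⟪p, v⟫_ℂ := by rw [hPp]
      have hwv : ⟪w, v⟫_ℂ = ⟪p, v⟫_ℂ := by
        calc ⟪w, v⟫_ℂ = ⟪j (adjoint j v), v⟫_ℂ := by rw [← hw]
          _ = ⟪v, j (adjoint j v)⟫_ℂ := hPinner v v
          _ = ⟪v, w⟫_ℂ := by rw [← hw]
          _ = ⟪p, v⟫_ℂ := hvw
      have hww : ⟪w, w⟫_ℂ = ⟪p, v⟫_ℂ := by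
        calc ⟪w, w⟫_ℂ = ⟪j (adjoint j v), w⟫_ℂ := by rw [← hw]
          _ = ⟪v, j (adjoint j w)⟫_ℂ := hPinner v w
          _ = ⟪v, w⟫_ℂ := by rw [hPw]
          _ = ⟪p, v⟫_ℂ := hvw
      have hzero : ⟪v - w, v - w⟫_ℂ = 0 := by
        rw [inner_sub_left, inner_sub_right, inner_sub_right, hvv, hvw, hwv, hww]
        ring
      exact (sub_eq_zero.mp (inner_self_eq_zero.mp hzero)).symm
    -- commute via adjoints
    have hcommv : ∀ t : T, j (adjoint j (A t)) = A (j (adjoint j t)) := by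
      intro t
      refine ext_inner_left ℂ fun s => ?_
      calc ⟪s, j (adjoint j (A t))⟫_ℂ = ⟪j (adjoint j s), A t⟫_ℂ := by rw [← hPinner]
        _ = ⟪A (j (adjoint j s)), t⟫_ℂ := by rw [← hAinner X hX]
        _ = ⟪j (adjoint j (A (j (adjoint j s)))), t⟫_ℂ := by rw [hkey]
        _ = ⟪A (j (adjoint j s)), j (adjoint j t)⟫_ℂ := hPinner _ t
        _ = ⟪j (adjoint j s), A (j (adjoint j t))⟫_ℂ := by rw [hAinner X hX]
        _ = ⟪s, j (adjoint j (A (j (adjoint j t))))⟫_ℂ := by rw [hPinner]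
        _ = ⟪s, A (j (adjoint j t))⟫_ℂ := by rw [hkey]
    show (j.comp (adjoint j)) * A = A * (j.comp (adjoint j))
    ext t
    simpa [mul_apply] using hcommv t
  · intro hcomm X hX
    have hcommv : ∀ t : T,
        j (adjoint j ((adjoint U * F X * U) t)) =
          (adjoint U * F X * U) (j (adjoint j t)) := by
      intro t
      have := congrArg (fun f => f t) (hcomm X hX)
      simpa [mul_apply] using this
    have hFv : ∀ s : T, F X (F X s) = F X s := by
      intro s
      have := congrArg (fun f => f s) (hFidem X hX)
      simpa [mul_apply] using this
    show E X * E X = E X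
    ext ψ
    rw [hE X hX]
    simp only [mul_apply, comp_apply]
    change (adjoint j) ((adjoint U * F X * U) (j ((adjoint j) ((adjoint U * F X * U) (j ψ))))) = (adjoint j) ((adjoint U * F X * U) (j ψ))
    simp only [hAv]
    have h1 := hcommv (j ψ)
    simp only [hAv, hjv] at h1
    rw [h1, hU2v, hFv]
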